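/- For every positive integer r, the linear span of the functions x ↦ (n·r)^x, for n ranging over the positive integers, is dense in L²[0,1]. -/

import Mathlib

open MeasureTheory
open scoped ENNReal NNReal

noncomputable def expC (r n : ℕ+) : C(Set.Icc (0:ℝ) 1, ℝ) :=
  ⟨fun x => Real.exp ((x:ℝ) * Real.log ((n:ℝ) * (r:ℝ))),
    Real.continuous_exp.comp (continuous_subtype_val.mul continuous_const)⟩

lemma expC_apply (r n : ℕ+) (x : Set.Icc (0:ℝ) 1) :
    expC r n x = Real.exp ((x:ℝ) * Real.log ((n:ℝ) * (r:ℝ))) := rfl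

lemma expC_mul (r n m : ℕ+) : expC r n * expC r m = expC r (n * m * r) := by
  ext x
  simp only [ContinuousMap.mul_apply, expC_apply, ← Real.exp_add, ← mul_add]
  congr 1
  rw [← Real.log_mul (by positivity) (by positivity)]
  congr 1
  push_cast
  ring

def S (r : ℕ+) : Set C(Set.Icc (0:ℝ) 1, ℝ) := Set.range (expC r)

def M (r : ℕ+) : Submonoid C(Set.Icc (0:ℝ) 1, ℝ) where
  carrier := insert 1 (S r)
  one_mem' := Set.mem_insert _ _
  mul_mem' := by
    rintro a b (rfl | ⟨n, rfl⟩) (rfl | ⟨m, rfl⟩)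
    · simpa using Set.mem_insert _ _
    · rw [one_mul]; exact Set.mem_insert_of_mem _ ⟨m, rfl⟩
    · rw [mul_one]; exact Set.mem_insert_of_mem _ ⟨n, rfl⟩
    · exact Set.mem_insert_of_mem _ ⟨n * m * r, (expC_mul r n m).symm⟩

lemma adjoin_le (r : ℕ+) :
    (Subalgebra.toSubmodule (Algebra.adjoin ℝ (S r)) : Submodule ℝ _) ≤
      Submodule.span ℝ (insert 1 (S r)) := by
  rw [Algebra.adjoin_eq_span]
  refine Submodule.span_le.2 ?_
  have h : Submonoid.closure (S r) ≤ M r := Submonoid.closure_le.2 (Set.subset_insert _ _)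
  exact fun x hx => Submodule.subset_span (h hx)

lemma separates (r : ℕ+) : (Algebra.adjoin ℝ (S r)).SeparatesPoints := by
  intro x y hxy
  refine ⟨expC r 2, ⟨expC r 2, Algebra.subset_adjoin ⟨2, rfl⟩, rfl⟩, ?_⟩
  simp only [expC_apply]
  intro h
  have hlog : Real.log ((2:ℕ+) * (r:ℝ)) ≠ 0 := by
    have : (1:ℝ) < (2:ℕ+) * (r:ℝ) := by
      have : (1:ℝ) ≤ (r:ℝ) := by exact_mod_cast r.one_le
      push_cast
      nlinarith
    exact ne_of_gt (Real.log_pos this)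
  have h2 := Real.exp_injective h
  exact hxy (Subtype.ext (mul_right_cancel₀ hlog h2))

lemma dense_span (r : ℕ+) (F : C(Set.Icc (0:ℝ) 1, ℝ)) {δ : ℝ} (hδ : 0 < δ) :
    ∃ p ∈ Submodule.span ℝ (S r), ‖F - p‖ < δ := by
  set u := expC r 1 with hu
  have hupos : ∀ x, 0 < u x := fun x => Real.exp_pos _
  set L : ℝ := Real.log (((1:ℕ+):ℝ) * (r:ℝ)) with hL
  set Cu : ℝ := Real.exp |L| with hCu
  have hCu1 : (1:ℝ) ≤ Cu := by
    rw [hCu]; calc (1:ℝ) = Real.exp 0 := (Real.exp_zero).symm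
    _ ≤ Real.exp |L| := Real.exp_le_exp.2 (abs_nonneg _)
  have hCupos : (0:ℝ) < Cu := lt_of_lt_of_le one_pos hCu1
  have hub : ∀ x : Set.Icc (0:ℝ) 1, |u x| ≤ Cu := by
    intro x
    rw [abs_of_pos (hupos x), hu, expC_apply, hCu]
    apply Real.exp_le_exp.2
    calc (x:ℝ) * L ≤ |(x:ℝ) * L| := le_abs_self _
    _ = |(x:ℝ)| * |L| := abs_mul _ _
    _ ≤ 1 * |L| := by
        apply mul_le_mul_of_nonneg_right _ (abs_nonneg _)
        rw [abs_of_nonneg x.2.1]; exact x.2.2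
    _ = |L| := one_mul _
  set w : C(Set.Icc (0:ℝ) 1, ℝ) :=
    ⟨fun x => F x / u x, F.continuous.div u.continuous (fun x => (hupos x).ne')⟩ with hw
  have hwcl : w ∈ (Algebra.adjoin ℝ (S r)).topologicalClosure :=
    ContinuousMap.continuousMap_mem_subalgebra_closure_of_separatesPoints _ (separates r) w
  have hwcl' : w ∈ closure ((Algebra.adjoin ℝ (S r)) : Set C(Set.Icc (0:ℝ) 1, ℝ)) := hwcl
  rw [Metric.mem_closure_iff] at hwcl'
  obtain ⟨a, ha, hdist⟩ := hwcl' (δ / Cu) (by positivity)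
  have haspan : a ∈ Submodule.span ℝ (insert 1 (S r)) := adjoin_le r ha
  refine ⟨a * u, ?_, ?_⟩
  · have hmap : a * u ∈ Submodule.map (LinearMap.mulRight ℝ u)
        (Submodule.span ℝ (insert 1 (S r))) := ⟨a, haspan, rfl⟩
    rw [Submodule.map_span] at hmap
    refine Submodule.span_le.2 ?_ hmap
    rintro _ ⟨f, (rfl | ⟨n, rfl⟩), rfl⟩
    · refine Submodule.subset_span ?_
      simp only [LinearMap.mulRight_apply, one_mul]
      exact ⟨1, rfl⟩
    · refine Submodule.subset_span ?_
      simp only [LinearMap.mulRight_apply]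
      rw [hu, expC_mul]
      exact ⟨n * 1 * r, rfl⟩
  · rw [ContinuousMap.norm_lt_iff _ hδ]
    intro x
    have hFx : F x = w x * u x := by
      rw [hw]; simp only [ContinuousMap.coe_mk]
      rw [div_mul_cancel₀ _ (hupos x).ne']
    have : (F - a * u) x = (w x - a x) * u x := by
      simp only [ContinuousMap.sub_apply, ContinuousMap.mul_apply, hFx]
      ring
    rw [this]
    have h1 : |w x - a x| ≤ dist w a := by
      rw [dist_eq_norm]
      exact ((w - a).norm_coe_le_norm x)
    calc ‖(w x - a x) * u x‖ = |w x - a x| * |u x| := abs_mul _ _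
      _ ≤ dist w a * Cu := mul_le_mul h1 (hub x) (abs_nonneg _) dist_nonneg
      _ < (δ / Cu) * Cu := mul_lt_mul_of_pos_right hdist hCupos
      _ = δ := div_mul_cancel₀ _ hCupos.ne'

theorem stmt_10 (r : ℕ+) (g : ℝ → ℝ)
    (hg : MemLp g 2 (volume.restrict (Set.Icc (0:ℝ) 1)))
    (ε : ℝ) (hε : 0 < ε) :
    ∃ (k : ℕ) (c : Fin k → ℝ) (n : Fin k → ℕ+),
      eLpNorm (fun x => g x - ∑ i, c i * Real.exp (x * Real.log ((n i : ℝ) * (r : ℝ))))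
          2 (volume.restrict (Set.Icc (0:ℝ) 1)) < ENNReal.ofReal ε := by
  set μ := volume.restrict (Set.Icc (0:ℝ) 1) with hμ
  have hμuniv : μ Set.univ = 1 := by
    rw [hμ, Measure.restrict_apply_univ, Real.volume_Icc]
    norm_num
  haveI hfin : IsFiniteMeasure μ := ⟨by rw [hμuniv]; exact ENNReal.one_lt_top⟩
  obtain ⟨f, hf, hfmem⟩ := hg.exists_boundedContinuous_eLpNorm_sub_le
    (by norm_num : (2:ℝ≥0∞) ≠ ⊤) (ε := ENNReal.ofReal (ε/4))
    (by simp only [ne_eq, ENNReal.ofReal_eq_zero, not_le]; linarith)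
  set F : C(Set.Icc (0:ℝ) 1, ℝ) :=
    ⟨fun x => f x, f.continuous.comp continuous_subtype_val⟩ with hF
  obtain ⟨p, hpmem, hpnorm⟩ := dense_span r F (by linarith : (0:ℝ) < ε/4)
  rw [Submodule.mem_span_set'] at hpmem
  obtain ⟨k, c, gs, hsum⟩ := hpmem
  have hgs : ∀ i, ∃ m : ℕ+, expC r m = (gs i : C(Set.Icc (0:ℝ) 1, ℝ)) := fun i => (gs i).2
  choose nfun hnfun using hgs
  refine ⟨k, c, nfun, ?_⟩
  set P : ℝ → ℝ := fun x => ∑ i, c i * Real.exp (x * Real.log ((nfun i : ℝ) * (r : ℝ))) with hP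
  have hPcont : Continuous P := by
    apply continuous_finset_sum
    intro i _
    exact continuous_const.mul (Real.continuous_exp.comp (continuous_id.mul continuous_const))
  have hPp : ∀ x (hx : x ∈ Set.Icc (0:ℝ) 1), P x = p ⟨x, hx⟩ := by
    intro x hx
    rw [← hsum]
    simp only [hP]
    rw [ContinuousMap.coe_sum]
    rw [Finset.sum_apply]
    refine Finset.sum_congr rfl fun i _ => ?_
    rw [ContinuousMap.coe_smul, Pi.smul_apply, ← hnfun i]
    simp [expC_apply, smul_eq_mul]
  have hbound : ∀ᵐ x ∂μ, ‖f x - P x‖ ≤ ε/4 := by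
    rw [hμ]
    refine (ae_restrict_iff' measurableSet_Icc).2 (ae_of_all _ fun x hx => ?_)
    have : f x - P x = (F - p) ⟨x, hx⟩ := by
      rw [hPp x hx]
      simp [hF]
    rw [this]
    exact le_trans ((F - p).norm_coe_le_norm _) hpnorm.le
  have h2 : eLpNorm (fun x => f x - P x) 2 μ ≤ ENNReal.ofReal (ε/4) := by
    have := eLpNorm_le_of_ae_bound (p := 2) (μ := μ) hbound
    rwa [hμuniv, ENNReal.one_rpow, one_mul] at this
  have hdecomp : (fun x => g x - P x) = (g - ⇑f) + (fun x => f x - P x) := by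
    funext x
    simp only [Pi.add_apply, Pi.sub_apply]
    ring
  have hmeas1 : AEStronglyMeasurable (g - ⇑f) μ :=
    hg.aestronglyMeasurable.sub f.continuous.aestronglyMeasurable
  have hmeas2 : AEStronglyMeasurable (fun x => f x - P x) μ :=
    (f.continuous.sub hPcont).aestronglyMeasurable
  calc eLpNorm (fun x => g x - P x) 2 μ
      = eLpNorm ((g - ⇑f) + (fun x => f x - P x)) 2 μ := by rw [hdecomp]
    _ ≤ eLpNorm (g - ⇑f) 2 μ + eLpNorm (fun x => f x - P x) 2 μ :=
        eLpNorm_add_le hmeas1 hmeas2 (by norm_num)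
    _ ≤ ENNReal.ofReal (ε/4) + ENNReal.ofReal (ε/4) := add_le_add hf h2
    _ = ENNReal.ofReal (ε/2) := by
        rw [← ENNReal.ofReal_add (by linarith) (by linarith)]
        congr 1
        ring
    _ < ENNReal.ofReal ε := (ENNReal.ofReal_lt_ofReal_iff hε).2 (by linarith)
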